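/- arXiv:1111.0062 — 4 statements merged into one kernel-verified Lean document; each statement's English description precedes it below -/
import Mathlib

section
/- A maximizing joint policy of an identical-payoff Bayesian game is Pareto optimal among Nash equilibria: if β* maximizes the expected payoff ∑_θ Pr(θ)·u(θ, β(θ)), then there is no other joint policy β' such that for all agents i and all types θ_i the conditional expected payoff V_{θ_i}(β_i'(θ_i), β'_{-i}) is at least V_{θ_i}(β_i*(θ_i), β*_{-i}), with strict inequality for at least one agent and type. -/
/-- Conditional expected payoff for agent `i` of type `θi` taking action `ai`
while the other agents follow the joint policy `β`. -/
noncomputable def Vcond {n : ℕ} (Θ A : Fin n → Type*)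
    [∀ i, Fintype (Θ i)] [∀ i, Fintype (A i)] [∀ i, DecidableEq (Θ i)]
    (Pr : (∀ i, Θ i) → ℝ) (u : (∀ i, Θ i) → (∀ i, A i) → ℝ)
    (i : Fin n) (θi : Θ i) (ai : A i) (β : ∀ j, Θ j → A j) : ℝ :=
  (∑ θ : ∀ j, Θ j,
      if θ i = θi then Pr θ * u θ (Function.update (fun j => β j (θ j)) i ai) else 0) /
    (∑ θ : ∀ j, Θ j, if θ i = θi then Pr θ else 0)

/-- Decomposition of the total expected payoff through conditional valuations. -/
lemma Vcond_decomp {n : ℕ} (Θ A : Fin n → Type*)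
    [∀ i, Fintype (Θ i)] [∀ i, Fintype (A i)] [∀ i, DecidableEq (Θ i)]
    (Pr : (∀ i, Θ i) → ℝ) (u : (∀ i, Θ i) → (∀ i, A i) → ℝ)
    (hpos : ∀ (i : Fin n) (θi : Θ i), 0 < ∑ θ : ∀ j, Θ j, if θ i = θi then Pr θ else 0)
    (β : ∀ j, Θ j → A j) (i : Fin n) :
    ∑ θi : Θ i, (∑ θ : ∀ j, Θ j, if θ i = θi then Pr θ else 0) *
        Vcond Θ A Pr u i θi (β i θi) β
      = ∑ θ, Pr θ * u θ (fun j => β j (θ j)) := by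
  have h1 : ∀ θi : Θ i,
      (∑ θ : ∀ j, Θ j, if θ i = θi then Pr θ else 0) *
        Vcond Θ A Pr u i θi (β i θi) β
      = ∑ θ : ∀ j, Θ j,
          if θ i = θi then
            Pr θ * u θ (Function.update (fun j => β j (θ j)) i (β i θi)) else 0 := by
    intro θi
    rw [Vcond, mul_div_cancel₀]
    exact (hpos i θi).ne'
  simp only [h1]
  rw [Finset.sum_comm]
  apply Finset.sum_congr rfl
  intro θ _
  rw [Finset.sum_ite_eq Finset.univ (θ i)
    (fun θi => Pr θ * u θ (Function.update (fun j => β j (θ j)) i (β i θi)))]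
  simp [Function.update_eq_self]

/-- A maximizing joint policy of an identical-payoff Bayesian game is
Pareto optimal: no other joint policy weakly improves the conditional expected payoff
for every agent and type, with strict improvement for some agent and type. -/
theorem stmt_1 {n : ℕ} (Θ A : Fin n → Type*)
    [∀ i, Fintype (Θ i)] [∀ i, Fintype (A i)]
    [∀ i, Nonempty (Θ i)] [∀ i, Nonempty (A i)] [∀ i, DecidableEq (Θ i)]
    (Pr : (∀ i, Θ i) → ℝ) (hPr : ∀ θ, 0 ≤ Pr θ) (hPr1 : ∑ θ, Pr θ = 1)
    (hpos : ∀ (i : Fin n) (θi : Θ i), 0 < ∑ θ : ∀ j, Θ j, if θ i = θi then Pr θ else 0)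
    (u : (∀ i, Θ i) → (∀ i, A i) → ℝ)
    (βstar : ∀ j, Θ j → A j)
    (hmax : ∀ β : ∀ j, Θ j → A j,
      (∑ θ, Pr θ * u θ (fun i => β i (θ i))) ≤
        ∑ θ, Pr θ * u θ (fun i => βstar i (θ i))) :
    ¬ ∃ β' : ∀ j, Θ j → A j,
        (∀ (i : Fin n) (θi : Θ i),
          Vcond Θ A Pr u i θi (βstar i θi) βstar ≤ Vcond Θ A Pr u i θi (β' i θi) β') ∧
        (∃ (i : Fin n) (θi : Θ i),
          Vcond Θ A Pr u i θi (βstar i θi) βstar < Vcond Θ A Pr u i θi (β' i θi) β') := by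
  rintro ⟨β', hweak, i0, θ0, hstrict⟩
  have hlt : ∑ θi : Θ i0, (∑ θ : ∀ j, Θ j, if θ i0 = θi then Pr θ else 0) *
        Vcond Θ A Pr u i0 θi (βstar i0 θi) βstar
      < ∑ θi : Θ i0, (∑ θ : ∀ j, Θ j, if θ i0 = θi then Pr θ else 0) *
        Vcond Θ A Pr u i0 θi (β' i0 θi) β' := by
    apply Finset.sum_lt_sum
    · intro θi _
      exact mul_le_mul_of_nonneg_left (hweak i0 θi) (hpos i0 θi).le
    · exact ⟨θ0, Finset.mem_univ _, mul_lt_mul_of_pos_left hstrict (hpos i0 θ0)⟩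
  rw [Vcond_decomp Θ A Pr u hpos βstar i0, Vcond_decomp Θ A Pr u hpos β' i0] at hlt
  exact absurd (hmax β') (not_le.mpr hlt)
end

section
/- The Q_MDP value function is an upper bound to the Q_POMDP value function: for a finite-horizon POMDP, at every stage t, belief b, and action a, Q_POMDP^t(b,a) ≤ ∑_s b(s) · Q_MDP^t(s,a), where Q_MDP is the optimal Q-function of the underlying fully observable MDP and Q_POMDP is the optimal Q-function of the belief MDP. -/
open Finset

variable {S A O : Type*} [Fintype S] [Fintype A] [Fintype O] [Nonempty A]

/-- Optimal Q-function of the underlying MDP, by backward induction;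
`k` is the number of steps-to-go after the current one (`k = 0` is the last stage). -/
noncomputable def QMDP (T : S → A → S → ℝ) (R : S → A → ℝ) : ℕ → S → A → ℝ
  | 0, s, a => R s a
  | k + 1, s, a =>
      R s a + ∑ s' : S, T s a s' *
        Finset.univ.sup' Finset.univ_nonempty (fun a' => QMDP T R k s' a')

/-- Probability `Pr(o | b, a)` of observing `o` after taking `a` in belief `b`. -/
noncomputable def Pobs (T : S → A → S → ℝ) (Ω : A → S → O → ℝ)
    (b : S → ℝ) (a : A) (o : O) : ℝ :=
  ∑ s' : S, Ω a s' o * ∑ s : S, T s a s' * b s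

/-- Bayes belief update `b^{a,o}`. -/
noncomputable def bUpd (T : S → A → S → ℝ) (Ω : A → S → O → ℝ)
    (b : S → ℝ) (a : A) (o : O) : S → ℝ :=
  fun s' => Ω a s' o * (∑ s : S, T s a s' * b s) / Pobs T Ω b a o

/-- Optimal Q-function of the belief MDP (`Q_POMDP`), by backward induction. -/
noncomputable def QPOMDP (T : S → A → S → ℝ) (Ω : A → S → O → ℝ) (R : S → A → ℝ) :
    ℕ → (S → ℝ) → A → ℝ
  | 0, b, a => ∑ s : S, b s * R s a
  | k + 1, b, a =>
      (∑ s : S, b s * R s a) +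
        ∑ o : O,
          if 0 < Pobs T Ω b a o then
            Pobs T Ω b a o *
              Finset.univ.sup' Finset.univ_nonempty
                (fun a' => QPOMDP T Ω R k (bUpd T Ω b a o) a')
          else 0

/-- `Q_MDP` is an upper bound to `Q_POMDP`: at every stage, belief `b`
and action `a`, `Q_POMDP(b,a) ≤ ∑_s b(s) Q_MDP(s,a)`. -/
theorem stmt_7 (T : S → A → S → ℝ) (Ω : A → S → O → ℝ) (R : S → A → ℝ)
    (hT : ∀ s a s', 0 ≤ T s a s') (hT1 : ∀ s a, ∑ s', T s a s' = 1)
    (hΩ : ∀ a s' o, 0 ≤ Ω a s' o) (hΩ1 : ∀ a s', ∑ o, Ω a s' o = 1)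
    (k : ℕ) (b : S → ℝ) (hb : ∀ s, 0 ≤ b s) (hb1 : ∑ s, b s = 1) (a : A) :
    QPOMDP T Ω R k b a ≤ ∑ s : S, b s * QMDP T R k s a := by
  induction k generalizing b a with
  | zero => simp [QPOMDP, QMDP]
  | succ k ih =>
    set M : S → ℝ := fun s' => Finset.univ.sup' Finset.univ_nonempty
      (fun a' => QMDP T R k s' a') with hM
    have hnum : ∀ o (s' : S), 0 ≤ Ω a s' o * (∑ s : S, T s a s' * b s) := fun o s' =>
      mul_nonneg (hΩ _ _ _) (Finset.sum_nonneg fun s _ => mul_nonneg (hT _ _ _) (hb s))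
    have key : ∀ o : O,
        (if 0 < Pobs T Ω b a o then
            Pobs T Ω b a o *
              Finset.univ.sup' Finset.univ_nonempty
                (fun a' => QPOMDP T Ω R k (bUpd T Ω b a o) a')
          else 0) ≤ ∑ s' : S, Ω a s' o * (∑ s : S, T s a s' * b s) * M s' := by
      intro o
      by_cases hP : 0 < Pobs T Ω b a o
      · rw [if_pos hP]
        have hbu : ∀ s', 0 ≤ bUpd T Ω b a o s' := fun s' =>
          div_nonneg (hnum o s') hP.le
        have hbu1 : ∑ s', bUpd T Ω b a o s' = 1 := by
          simp only [bUpd, ← Finset.sum_div]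
          rw [div_eq_one_iff_eq hP.ne']
          rfl
        have hsup : Finset.univ.sup' Finset.univ_nonempty
            (fun a' => QPOMDP T Ω R k (bUpd T Ω b a o) a')
            ≤ ∑ s' : S, bUpd T Ω b a o s' * M s' := by
          apply Finset.sup'_le
          intro a' _
          calc QPOMDP T Ω R k (bUpd T Ω b a o) a'
              ≤ ∑ s', bUpd T Ω b a o s' * QMDP T R k s' a' := ih _ hbu hbu1 a'
            _ ≤ ∑ s', bUpd T Ω b a o s' * M s' := by
                refine Finset.sum_le_sum fun s' _ => ?_
                exact mul_le_mul_of_nonneg_left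
                  (Finset.le_sup' (fun a' => QMDP T R k s' a') (Finset.mem_univ a'))
                  (hbu s')
        calc Pobs T Ω b a o * Finset.univ.sup' Finset.univ_nonempty
              (fun a' => QPOMDP T Ω R k (bUpd T Ω b a o) a')
            ≤ Pobs T Ω b a o * ∑ s', bUpd T Ω b a o s' * M s' :=
              mul_le_mul_of_nonneg_left hsup hP.le
          _ = ∑ s', Ω a s' o * (∑ s, T s a s' * b s) * M s' := by
              rw [Finset.mul_sum]
              refine Finset.sum_congr rfl fun s' _ => ?_
              rw [bUpd]
              field_simp
      · rw [if_neg hP]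
        have hP0 : ∑ s' : S, Ω a s' o * ∑ s : S, T s a s' * b s = 0 :=
          le_antisymm (not_lt.mp hP) (Finset.sum_nonneg fun s' _ => hnum o s')
        have hzero : ∀ s' ∈ (Finset.univ : Finset S),
            Ω a s' o * (∑ s, T s a s' * b s) = 0 :=
          (Finset.sum_eq_zero_iff_of_nonneg fun s' _ => hnum o s').mp hP0
        refine le_of_eq (Finset.sum_eq_zero fun s' _ => ?_).symm
        rw [hzero s' (Finset.mem_univ s'), zero_mul]
    have swap : ∑ o, ∑ s' : S, Ω a s' o * (∑ s : S, T s a s' * b s) * M s'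
        = ∑ s : S, b s * ∑ s' : S, T s a s' * M s' := by
      have step1 : ∀ s' : S, ∑ o, Ω a s' o * (∑ s : S, T s a s' * b s) * M s'
          = (∑ s : S, T s a s' * b s) * M s' := by
        intro s'
        rw [← Finset.sum_mul, ← Finset.sum_mul, hΩ1, one_mul]
      calc ∑ o, ∑ s' : S, Ω a s' o * (∑ s : S, T s a s' * b s) * M s'
          = ∑ s' : S, ∑ o, Ω a s' o * (∑ s : S, T s a s' * b s) * M s' :=
            Finset.sum_comm
        _ = ∑ s' : S, (∑ s : S, T s a s' * b s) * M s' :=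
            Finset.sum_congr rfl fun s' _ => step1 s'
        _ = ∑ s' : S, ∑ s : S, T s a s' * b s * M s' := by
            simp only [Finset.sum_mul]
        _ = ∑ s : S, ∑ s' : S, T s a s' * b s * M s' := Finset.sum_comm
        _ = ∑ s : S, b s * ∑ s' : S, T s a s' * M s' := by
            simp only [Finset.mul_sum]
            exact Finset.sum_congr rfl fun s _ =>
              Finset.sum_congr rfl fun s' _ => by ring
    have lhs_eq : QPOMDP T Ω R (k + 1) b a
        = (∑ s : S, b s * R s a) +
          ∑ o : O, (if 0 < Pobs T Ω b a o then
            Pobs T Ω b a o *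
              Finset.univ.sup' Finset.univ_nonempty
                (fun a' => QPOMDP T Ω R k (bUpd T Ω b a o) a') else 0) := rfl
    have rhs_eq : ∑ s : S, b s * QMDP T R (k + 1) s a
        = (∑ s : S, b s * R s a) + ∑ s : S, b s * ∑ s' : S, T s a s' * M s' := by
      simp only [QMDP, mul_add, Finset.sum_add_distrib]
      rfl
    rw [lhs_eq, rhs_eq, ← swap]
    exact add_le_add (le_refl _) (Finset.sum_le_sum fun o _ => key o)
end

section
/- The Q_POMDP value function is an upper bound to the Q_BG value function: in a two-agent finite-horizon model, at each stage and for each joint belief b and joint action a, Q_BG^t(b,a) ≤ Q_POMDP^t(b,a), where Q_BG is defined with the future-reward maximization ranging over decentralized policies β = (β_1, β_2) where β_i maps agent i's individual last observation to an individual action, while Q_POMDP maximizes the joint action per joint observation. -/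
open Finset

variable {S A₁ A₂ O₁ O₂ : Type*} [Fintype S] [Fintype A₁] [Fintype A₂]
  [Fintype O₁] [Fintype O₂] [Nonempty A₁] [Nonempty A₂]
  [DecidableEq O₁] [DecidableEq O₂]

/-- Probability `Pr(o | b, a)` of the joint observation `o` after joint action `a`. -/
noncomputable def Pobs8 (T : S → A₁ × A₂ → S → ℝ) (Ω : A₁ × A₂ → S → O₁ × O₂ → ℝ)
    (b : S → ℝ) (a : A₁ × A₂) (o : O₁ × O₂) : ℝ :=
  ∑ s' : S, Ω a s' o * ∑ s : S, T s a s' * b s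

/-- Bayes joint-belief update `b^{a,o}`. -/
noncomputable def bUpd8 (T : S → A₁ × A₂ → S → ℝ) (Ω : A₁ × A₂ → S → O₁ × O₂ → ℝ)
    (b : S → ℝ) (a : A₁ × A₂) (o : O₁ × O₂) : S → ℝ :=
  fun s' => Ω a s' o * (∑ s : S, T s a s' * b s) / Pobs8 T Ω b a o

/-- `Q_POMDP` for the two-agent model: the future joint action is chosen per joint
observation. -/
noncomputable def QP8 (T : S → A₁ × A₂ → S → ℝ) (Ω : A₁ × A₂ → S → O₁ × O₂ → ℝ)
    (R : S → A₁ × A₂ → ℝ) : ℕ → (S → ℝ) → A₁ × A₂ → ℝ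
  | 0, b, a => ∑ s : S, b s * R s a
  | k + 1, b, a =>
      (∑ s : S, b s * R s a) +
        ∑ o : O₁ × O₂, Pobs8 T Ω b a o *
          Finset.univ.sup' Finset.univ_nonempty
            (fun a' : A₁ × A₂ => QP8 T Ω R k (bUpd8 T Ω b a o) a')

/-- `Q_BG`: the future-reward maximization ranges over decentralized policies
`β = (β₁, β₂)` mapping each agent's individual last observation to its action. -/
noncomputable def QBG8 (T : S → A₁ × A₂ → S → ℝ) (Ω : A₁ × A₂ → S → O₁ × O₂ → ℝ)
    (R : S → A₁ × A₂ → ℝ) : ℕ → (S → ℝ) → A₁ × A₂ → ℝ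
  | 0, b, a => ∑ s : S, b s * R s a
  | k + 1, b, a =>
      (∑ s : S, b s * R s a) +
        Finset.univ.sup' Finset.univ_nonempty
          (fun β : (O₁ → A₁) × (O₂ → A₂) =>
            ∑ o : O₁ × O₂, Pobs8 T Ω b a o *
              QBG8 T Ω R k (bUpd8 T Ω b a o) (β.1 o.1, β.2 o.2))


lemma aux8 (T : S → A₁ × A₂ → S → ℝ) (Ω : A₁ × A₂ → S → O₁ × O₂ → ℝ)
    (R : S → A₁ × A₂ → ℝ)
    (hT : ∀ s a s', 0 ≤ T s a s') (hΩ : ∀ a s' o, 0 ≤ Ω a s' o)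
    (k : ℕ) : ∀ (b : S → ℝ), (∀ s, 0 ≤ b s) → ∀ a,
    QBG8 T Ω R k b a ≤ QP8 T Ω R k b a := by
  induction k with
  | zero => intro b hb a; simp [QBG8, QP8]
  | succ k ih =>
    intro b hb a
    have hP : ∀ o, 0 ≤ Pobs8 T Ω b a o := by
      intro o
      exact Finset.sum_nonneg fun s' _ => mul_nonneg (hΩ _ _ _)
        (Finset.sum_nonneg fun s _ => mul_nonneg (hT _ _ _) (hb s))
    have hb' : ∀ o s', 0 ≤ bUpd8 T Ω b a o s' := by
      intro o s'
      exact div_nonneg (mul_nonneg (hΩ _ _ _)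
        (Finset.sum_nonneg fun s _ => mul_nonneg (hT _ _ _) (hb s))) (hP o)
    simp only [QBG8, QP8]
    gcongr
    apply Finset.sup'_le
    intro β _
    apply Finset.sum_le_sum
    intro o _
    apply mul_le_mul_of_nonneg_left _ (hP o)
    exact le_trans (ih _ (hb' o) _)
      (Finset.le_sup' (fun a' => QP8 T Ω R k (bUpd8 T Ω b a o) a')
        (Finset.mem_univ (β.1 o.1, β.2 o.2)))

/-- `Q_POMDP` is an upper bound to `Q_BG`: at each stage, joint belief
`b` and joint action `a`, `Q_BG(b,a) ≤ Q_POMDP(b,a)`. -/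
theorem stmt_8 (T : S → A₁ × A₂ → S → ℝ) (Ω : A₁ × A₂ → S → O₁ × O₂ → ℝ)
    (R : S → A₁ × A₂ → ℝ)
    (hT : ∀ s a s', 0 ≤ T s a s') (hT1 : ∀ s a, ∑ s', T s a s' = 1)
    (hΩ : ∀ a s' o, 0 ≤ Ω a s' o) (hΩ1 : ∀ a s', ∑ o, Ω a s' o = 1)
    (k : ℕ) (b : S → ℝ) (hb : ∀ s, 0 ≤ b s) (hb1 : ∑ s, b s = 1) (a : A₁ × A₂) :
    QBG8 T Ω R k b a ≤ QP8 T Ω R k b a := by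
  exact aux8 T Ω R hT hΩ k b hb a
end

section
/- Greedy stage-wise maximization recovers an optimal joint policy when using the optimal policy's Q-function: suppose π* is an optimal pure joint policy for a finite-horizon Dec-POMDP and Q* is defined recursively by Q*(h⃗^{h−1}, a) = R(h⃗^{h−1}, a) and Q*(h⃗^t, a) = R(h⃗^t, a) + ∑_{o⃗} Pr(o⃗ | h⃗^t, a)·Q*((h⃗^t, a, o⃗), π*(h⃗^{t+1})). Then for each stage t, the decision rule of π* at stage t maximizes, over all stage-t decision rules β^t (tuples of maps from individual observation histories to individual actions), the quantity ∑_{h⃗^t consistent with π*} Pr(h⃗^t | b^0)·Q*(h⃗^t, β^t(h⃗^t)). -/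
open Finset

variable {n : ℕ} {S : Type*} [Fintype S]
variable {A O : Fin n → Type*} [∀ i, Fintype (A i)] [∀ i, Fintype (O i)]
  [∀ i, DecidableEq (O i)]

/-- The joint policy induced by individual policies `π i`, applied to a joint
observation history: each agent acts on its individual observation history. -/
def jointPol (π : ∀ i, ∀ t : ℕ, (Fin t → O i) → A i) (t : ℕ)
    (hist : Fin t → ∀ i, O i) : ∀ i, A i :=
  fun i => π i t (fun k => hist k i)

/-- The joint action prescribed by a stage-`t` joint decision rule
`β = (β₁,…,βₙ)` at a joint observation history. -/
def jointDR {t : ℕ} (β : ∀ i, (Fin t → O i) → A i) (hist : Fin t → ∀ i, O i) :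
    ∀ i, A i :=
  fun i => β i (fun k => hist k i)

/-- Joint distribution over (state, joint observation-history) pairs induced by
`b0`, the kernel `P` and a joint policy `ρ`. -/
noncomputable def Pd13 (P : S → (∀ i, A i) → S × (∀ i, O i) → ℝ) (b0 : S → ℝ)
    (ρ : ∀ t : ℕ, (Fin t → ∀ i, O i) → ∀ i, A i) :
    ∀ t : ℕ, S → (Fin t → ∀ i, O i) → ℝ
  | 0, s, _ => b0 s
  | t + 1, s', hist =>
      ∑ s : S, P s (ρ t (Fin.init hist)) (s', hist (Fin.last t)) *
        Pd13 P b0 ρ t s (Fin.init hist)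

/-- Marginal probability of a joint observation history. -/
noncomputable def PrH13 (P : S → (∀ i, A i) → S × (∀ i, O i) → ℝ) (b0 : S → ℝ)
    (ρ : ∀ t : ℕ, (Fin t → ∀ i, O i) → ∀ i, A i) (t : ℕ)
    (hist : Fin t → ∀ i, O i) : ℝ :=
  ∑ s : S, Pd13 P b0 ρ t s hist

/-- Belief `Pr(s | h^t, b0)` over states given a history. -/
noncomputable def bel13 (P : S → (∀ i, A i) → S × (∀ i, O i) → ℝ) (b0 : S → ℝ)
    (ρ : ∀ t : ℕ, (Fin t → ∀ i, O i) → ∀ i, A i) (t : ℕ)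
    (hist : Fin t → ∀ i, O i) : S → ℝ :=
  fun s => Pd13 P b0 ρ t s hist / PrH13 P b0 ρ t hist

/-- Probability `Pr(o | b, a)` of the next joint observation given belief `b`. -/
noncomputable def Pobs13 (P : S → (∀ i, A i) → S × (∀ i, O i) → ℝ)
    (b : S → ℝ) (a : ∀ i, A i) (o : ∀ i, O i) : ℝ :=
  ∑ s' : S, ∑ s : S, P s a (s', o) * b s

/-- Bayes belief update. -/
noncomputable def bUpd13 (P : S → (∀ i, A i) → S × (∀ i, O i) → ℝ)
    (b : S → ℝ) (a : ∀ i, A i) (o : ∀ i, O i) : S → ℝ :=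
  fun s' => (∑ s : S, P s a (s', o) * b s) / Pobs13 P b a o

/-- The Q-value function of the joint policy `π`:
`Q*(h^{h-1},a) = R(h^{h-1},a)` and
`Q*(h^t,a) = R(h^t,a) + ∑_o Pr(o|h^t,a)·Q*((h^t,a,o), π(h^{t+1}))`,
where the expected immediate reward is computed from the belief `b` associated
with the history `h^t`. -/
noncomputable def Qstar13 (P : S → (∀ i, A i) → S × (∀ i, O i) → ℝ)
    (R : S → (∀ i, A i) → ℝ) (π : ∀ i, ∀ t : ℕ, (Fin t → O i) → A i) (h : ℕ) :
    ∀ t : ℕ, (Fin t → ∀ i, O i) → (S → ℝ) → (∀ i, A i) → ℝ :=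
  fun t hist b a =>
    if ht : t + 1 < h then
      (∑ s : S, b s * R s a) +
        ∑ o : ∀ i, O i, Pobs13 P b a o *
          Qstar13 P R π h (t + 1) (Fin.snoc hist o) (bUpd13 P b a o)
            (jointPol π (t + 1) (Fin.snoc hist o))
    else ∑ s : S, b s * R s a
termination_by t => h - t
decreasing_by omega

/-- The (flat) value of a joint policy `ρ`: `V(ρ) = ∑_{t<h} E[R(s^t, ρ(h^t))]`. -/
noncomputable def Vval13 (P : S → (∀ i, A i) → S × (∀ i, O i) → ℝ)
    (R : S → (∀ i, A i) → ℝ) (b0 : S → ℝ)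
    (ρ : ∀ t : ℕ, (Fin t → ∀ i, O i) → ∀ i, A i) (h : ℕ) : ℝ :=
  ∑ t ∈ Finset.range h, ∑ hist : Fin t → ∀ i, O i, ∑ s : S,
    Pd13 P b0 ρ t s hist * R s (ρ t hist)

section Aux13

variable (P : S → (∀ i, A i) → S × (∀ i, O i) → ℝ) (R : S → (∀ i, A i) → ℝ)
  (b0 : S → ℝ) (π : ∀ i, ∀ t : ℕ, (Fin t → O i) → A i) (h : ℕ)

/-- Unnormalized Q-function: like `Qstar13` but propagating an unnormalized
measure over states instead of a belief. -/
noncomputable def Qu13 : ∀ t : ℕ, (Fin t → ∀ i, O i) → (S → ℝ) → (∀ i, A i) → ℝ :=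
  fun t hist d a =>
    if ht : t + 1 < h then
      (∑ s : S, d s * R s a) +
        ∑ o : ∀ i, O i,
          Qu13 (t + 1) (Fin.snoc hist o) (fun s' => ∑ s : S, P s a (s', o) * d s)
            (jointPol π (t + 1) (Fin.snoc hist o))
    else ∑ s : S, d s * R s a
termination_by t => h - t
decreasing_by omega

theorem Qu13_zero (t : ℕ) (hist : Fin t → ∀ i, O i) (d : S → ℝ) (a : ∀ i, A i)
    (hd : ∀ s, d s = 0) : Qu13 P R π h t hist d a = 0 := by
  rw [Qu13]
  split
  · rename_i ht
    have hz : (∑ o : ∀ i, O i,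
        Qu13 P R π h (t + 1) (Fin.snoc hist o) (fun s' => ∑ s : S, P s a (s', o) * d s)
          (jointPol π (t + 1) (Fin.snoc hist o))) = 0 :=
      Finset.sum_eq_zero fun o _ =>
        Qu13_zero (t + 1) (Fin.snoc hist o) _ _ (fun s' => by simp [hd])
    rw [hz]
    simp [hd]
  · simp [hd]
termination_by h - t
decreasing_by omega

theorem Qu13_eq (hP : ∀ s a x, 0 ≤ P s a x) (t : ℕ) (hist : Fin t → ∀ i, O i)
    (d : S → ℝ) (a : ∀ i, A i) (hd : ∀ s, 0 ≤ d s) :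
    Qu13 P R π h t hist d a =
      (∑ s : S, d s) * Qstar13 P R π h t hist (fun s => d s / ∑ s' : S, d s') a := by
  by_cases hT : (∑ s : S, d s) = 0
  · have hd0 : ∀ s, d s = 0 := fun s =>
      (Finset.sum_eq_zero_iff_of_nonneg (fun s _ => hd s)).mp hT s (mem_univ s)
    rw [Qu13_zero P R π h t hist d a hd0, hT, zero_mul]
  · have hd' : ∀ (o : ∀ i, O i) (s' : S), 0 ≤ ∑ s : S, P s a (s', o) * d s :=
      fun o s' => Finset.sum_nonneg fun s _ => mul_nonneg (hP _ _ _) (hd s)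
    have hPobs : ∀ o : ∀ i, O i, Pobs13 P (fun s => d s / ∑ s' : S, d s') a o
        = (∑ s' : S, ∑ s : S, P s a (s', o) * d s) / (∑ s : S, d s) := by
      intro o
      rw [Pobs13, Finset.sum_div]
      refine Finset.sum_congr rfl fun s' _ => ?_
      rw [Finset.sum_div]
      exact Finset.sum_congr rfl fun s _ => (mul_div_assoc _ _ _).symm
    have hbUpd : ∀ o : ∀ i, O i, bUpd13 P (fun s => d s / ∑ s' : S, d s') a o
        = fun s' => (∑ s : S, P s a (s', o) * d s) /
            (∑ s'' : S, ∑ s : S, P s a (s'', o) * d s) := by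
      intro o
      funext s'
      rw [bUpd13, hPobs]
      have hnum : (∑ s : S, P s a (s', o) * (d s / ∑ s'' : S, d s''))
          = (∑ s : S, P s a (s', o) * d s) / (∑ s'' : S, d s'') := by
        rw [Finset.sum_div]
        exact Finset.sum_congr rfl fun s _ => (mul_div_assoc _ _ _).symm
      rw [hnum]
      by_cases hT' : (∑ s'' : S, ∑ s : S, P s a (s'', o) * d s) = 0
      · have : (∑ s : S, P s a (s', o) * d s) = 0 :=
          (Finset.sum_eq_zero_iff_of_nonneg (fun s'' _ => hd' o s'')).mp hT' s' (mem_univ s')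
        simp [this, hT']
      · rw [div_div_eq_mul_div, div_mul_cancel₀ _ hT]
    rw [Qu13, Qstar13]
    split
    · rename_i ht
      have IH : ∀ o : ∀ i, O i,
          Qu13 P R π h (t + 1) (Fin.snoc hist o) (fun s' => ∑ s : S, P s a (s', o) * d s)
              (jointPol π (t + 1) (Fin.snoc hist o))
            = (∑ s' : S, ∑ s : S, P s a (s', o) * d s) *
              Qstar13 P R π h (t + 1) (Fin.snoc hist o)
                (fun s' => (∑ s : S, P s a (s', o) * d s) /
                  (∑ s'' : S, ∑ s : S, P s a (s'', o) * d s))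
                (jointPol π (t + 1) (Fin.snoc hist o)) :=
        fun o => Qu13_eq hP (t + 1) (Fin.snoc hist o) _ _ (hd' o)
      rw [mul_add]
      congr 1
      · rw [Finset.mul_sum]
        refine Finset.sum_congr rfl fun s _ => ?_
        field_simp
      · rw [Finset.mul_sum]
        refine Finset.sum_congr rfl fun o _ => ?_
        rw [IH o, hPobs o, hbUpd o]
        field_simp
    · rw [Finset.mul_sum]
      refine Finset.sum_congr rfl fun s _ => ?_
      field_simp
termination_by h - t
decreasing_by omega

theorem Pd13_nonneg (hP : ∀ s a x, 0 ≤ P s a x) (hb0 : ∀ s, 0 ≤ b0 s)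
    (ρ : ∀ t : ℕ, (Fin t → ∀ i, O i) → ∀ i, A i) :
    ∀ t s hist, 0 ≤ Pd13 P b0 ρ t s hist := by
  intro t
  induction t with
  | zero => intro s hist; exact hb0 s
  | succ t ih =>
      intro s hist
      exact Finset.sum_nonneg fun s' _ => mul_nonneg (hP _ _ _) (ih s' _)

theorem Pd13_congr (ρ ρ' : ∀ t : ℕ, (Fin t → ∀ i, O i) → ∀ i, A i) :
    ∀ t, (∀ u, u < t → ρ u = ρ' u) →
      ∀ s hist, Pd13 P b0 ρ t s hist = Pd13 P b0 ρ' t s hist := by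
  intro t
  induction t with
  | zero => intro _ s hist; rfl
  | succ t ih =>
      intro hagree s hist
      simp only [Pd13]
      rw [hagree t (by omega)]
      exact Finset.sum_congr rfl fun s' _ => by
        rw [ih (fun u hu => hagree u (by omega)) s' _]

theorem PrHQ_eq_Qu (hP : ∀ s a x, 0 ≤ P s a x) (hb0 : ∀ s, 0 ≤ b0 s)
    (ρ : ∀ t : ℕ, (Fin t → ∀ i, O i) → ∀ i, A i) (t : ℕ)
    (hist : Fin t → ∀ i, O i) (a : ∀ i, A i) :
    PrH13 P b0 ρ t hist * Qstar13 P R π h t hist (bel13 P b0 ρ t hist) a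
      = Qu13 P R π h t hist (fun s => Pd13 P b0 ρ t s hist) a := by
  rw [Qu13_eq P R π h hP t hist _ a (fun s => Pd13_nonneg P b0 hP hb0 ρ t s hist)]
  rfl

theorem claimM (hP : ∀ s a x, 0 ≤ P s a x) (hb0 : ∀ s, 0 ≤ b0 s)
    (t : ℕ) (ht : t < h) (ρ : ∀ u : ℕ, (Fin u → ∀ i, O i) → ∀ i, A i)
    (hρ : ∀ u, t < u → ρ u = jointPol π u) :
    (∑ hist : Fin t → ∀ i, O i,
        Qu13 P R π h t hist (fun s => Pd13 P b0 ρ t s hist) (ρ t hist))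
      = ∑ u ∈ Finset.Ico t h, ∑ hist : Fin u → ∀ i, O i, ∑ s : S,
          Pd13 P b0 ρ u s hist * R s (ρ u hist) := by
  by_cases h2 : t + 1 < h
  · have IH := claimM hP hb0 (t + 1) h2 ρ (fun u hu => hρ u (by omega))
    rw [Finset.sum_eq_sum_Ico_succ_bot ht, ← IH]
    have step : ∀ hist : Fin t → ∀ i, O i,
        Qu13 P R π h t hist (fun s => Pd13 P b0 ρ t s hist) (ρ t hist)
          = (∑ s : S, Pd13 P b0 ρ t s hist * R s (ρ t hist)) +
            ∑ o : ∀ i, O i,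
              Qu13 P R π h (t + 1) (Fin.snoc hist o)
                (fun s' => Pd13 P b0 ρ (t + 1) s' (Fin.snoc hist o))
                (ρ (t + 1) (Fin.snoc hist o)) := by
      intro hist
      rw [Qu13, dif_pos h2]
      congr 1
      refine Finset.sum_congr rfl fun o _ => ?_
      have hmeas : (fun s' => ∑ s : S, P s (ρ t hist) (s', o) * Pd13 P b0 ρ t s hist)
          = fun s' => Pd13 P b0 ρ (t + 1) s' (Fin.snoc hist o) := by
        funext s'
        simp [Pd13, Fin.init_snoc, Fin.snoc_last]
      rw [hmeas, hρ (t + 1) (by omega)]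
    rw [Finset.sum_congr rfl fun hist _ => step hist, Finset.sum_add_distrib]
    congr 1
    rw [Finset.sum_comm, ← Finset.sum_product', Finset.univ_product_univ]
    exact Fintype.sum_equiv (Fin.snocEquiv (fun _ => ∀ i, O i)) _ _ (fun p => rfl)
  · have hh : h = t + 1 := by omega
    subst hh
    rw [Nat.Ico_succ_singleton, Finset.sum_singleton]
    refine Finset.sum_congr rfl fun hist _ => ?_
    rw [Qu13, dif_neg h2]
termination_by h - t
decreasing_by omega

/-- The policy obtained from `π` by replacing its stage-`t` decision rule
with `β`. -/
def modPol13 (t : ℕ) (β : ∀ i, (Fin t → O i) → A i) :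
    ∀ i, ∀ u : ℕ, (Fin u → O i) → A i :=
  fun i u => if hu : u = t then (fun obs => β i (fun k => obs (Fin.cast hu.symm k)))
    else π i u

theorem modPol13_at (t : ℕ) (β : ∀ i, (Fin t → O i) → A i) :
    jointPol (modPol13 π t β) t = jointDR β := by
  funext hist i
  simp [jointPol, jointDR, modPol13]

theorem modPol13_ne (t : ℕ) (β : ∀ i, (Fin t → O i) → A i) (u : ℕ) (hu : u ≠ t) :
    jointPol (modPol13 π t β) u = jointPol π u := by
  funext hist i
  simp [jointPol, modPol13, hu]

end Aux13

/-- Greedy stage-wise maximization recovers an optimal joint policy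
when using the optimal policy's Q-function: if `π` is an optimal pure joint policy
then, at every stage `t`, its decision rule maximizes
`∑_{h^t consistent with π} Pr(h^t|b0) · Q*(h^t, β(h^t))` over all stage-`t`
joint decision rules `β`. -/
theorem stmt_13 (P : S → (∀ i, A i) → S × (∀ i, O i) → ℝ)
    (R : S → (∀ i, A i) → ℝ) (b0 : S → ℝ)
    (π : ∀ i, ∀ t : ℕ, (Fin t → O i) → A i) (h : ℕ)
    (hP : ∀ s a x, 0 ≤ P s a x) (hP1 : ∀ s a, ∑ x : S × (∀ i, O i), P s a x = 1)
    (hb0 : ∀ s, 0 ≤ b0 s) (hb01 : ∑ s, b0 s = 1)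
    (hopt : ∀ π' : ∀ i, ∀ t : ℕ, (Fin t → O i) → A i,
      Vval13 P R b0 (jointPol π') h ≤ Vval13 P R b0 (jointPol π) h) :
    ∀ t, t < h → ∀ β : ∀ i, (Fin t → O i) → A i,
      (∑ hist : Fin t → ∀ i, O i,
          PrH13 P b0 (jointPol π) t hist *
            Qstar13 P R π h t hist (bel13 P b0 (jointPol π) t hist) (jointDR β hist)) ≤
        ∑ hist : Fin t → ∀ i, O i,
          PrH13 P b0 (jointPol π) t hist *
            Qstar13 P R π h t hist (bel13 P b0 (jointPol π) t hist)
              (jointPol π t hist) := by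
  intro t ht β
  have hπ't : jointPol (modPol13 π t β) t = jointDR β := modPol13_at π t β
  have hπ'u : ∀ u, u ≠ t → jointPol (modPol13 π t β) u = jointPol π u :=
    modPol13_ne π t β
  have hPd : ∀ s hist, Pd13 P b0 (jointPol (modPol13 π t β)) t s hist
      = Pd13 P b0 (jointPol π) t s hist :=
    Pd13_congr P b0 _ _ t (fun u hu => hπ'u u (by omega))
  have hL : (∑ hist : Fin t → ∀ i, O i,
        PrH13 P b0 (jointPol π) t hist *
          Qstar13 P R π h t hist (bel13 P b0 (jointPol π) t hist) (jointDR β hist))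
      = ∑ u ∈ Finset.Ico t h, ∑ hist : Fin u → ∀ i, O i, ∑ s : S,
          Pd13 P b0 (jointPol (modPol13 π t β)) u s hist *
            R s (jointPol (modPol13 π t β) u hist) := by
    rw [← claimM P R b0 π h hP hb0 t ht (jointPol (modPol13 π t β))
      (fun u hu => hπ'u u (by omega))]
    refine Finset.sum_congr rfl fun hist _ => ?_
    rw [PrHQ_eq_Qu P R b0 π h hP hb0 (jointPol π) t hist]
    have hm : (fun s => Pd13 P b0 (jointPol (modPol13 π t β)) t s hist)
        = fun s => Pd13 P b0 (jointPol π) t s hist := funext fun s => hPd s hist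
    rw [hm, hπ't]
  have hR : (∑ hist : Fin t → ∀ i, O i,
        PrH13 P b0 (jointPol π) t hist *
          Qstar13 P R π h t hist (bel13 P b0 (jointPol π) t hist) (jointPol π t hist))
      = ∑ u ∈ Finset.Ico t h, ∑ hist : Fin u → ∀ i, O i, ∑ s : S,
          Pd13 P b0 (jointPol π) u s hist * R s (jointPol π u hist) := by
    rw [← claimM P R b0 π h hP hb0 t ht (jointPol π) (fun u hu => rfl)]
    exact Finset.sum_congr rfl fun hist _ =>
      PrHQ_eq_Qu P R b0 π h hP hb0 (jointPol π) t hist _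
  have hV := hopt (modPol13 π t β)
  rw [Vval13, Vval13, ← Finset.sum_range_add_sum_Ico _ ht.le,
    ← Finset.sum_range_add_sum_Ico _ ht.le] at hV
  have hpre : (∑ u ∈ Finset.range t, ∑ hist : Fin u → ∀ i, O i, ∑ s : S,
        Pd13 P b0 (jointPol (modPol13 π t β)) u s hist *
          R s (jointPol (modPol13 π t β) u hist))
      = ∑ u ∈ Finset.range t, ∑ hist : Fin u → ∀ i, O i, ∑ s : S,
          Pd13 P b0 (jointPol π) u s hist * R s (jointPol π u hist) := by
    refine Finset.sum_congr rfl fun u hu => ?_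
    have hut : u < t := Finset.mem_range.mp hu
    have h1 : jointPol (modPol13 π t β) u = jointPol π u := hπ'u u (by omega)
    have h2 : ∀ s hist, Pd13 P b0 (jointPol (modPol13 π t β)) u s hist
        = Pd13 P b0 (jointPol π) u s hist :=
      Pd13_congr P b0 _ _ u (fun v hv => hπ'u v (by omega))
    rw [h1]
    exact Finset.sum_congr rfl fun hist _ =>
      Finset.sum_congr rfl fun s _ => by rw [h2 s hist]
  rw [hpre] at hV
  rw [hL, hR]
  linarith
end
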